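/- Let Ω be a compact metrizable topological space, let C(Ω) be the Banach space of continuous real-valued functions on Ω with the supremum norm, let D be a closed subset of Ω, and let J = {f ∈ C(Ω) : f(t) = 0 for all t ∈ D}. Then the pair (C(Ω), J) has the quotient lifting property (QLP). -/

import Mathlib

/-- The pair `(X, J)` has the quotient lifting property (QLP): every bounded operator
`S : Y → X/J` from a Banach space `Y` lifts to `T : Y → X` with `π ∘ T = S` and `‖T‖ = ‖S‖`. -/
def HasQLP (X : Type*) [NormedAddCommGroup X] [NormedSpace ℝ X] (J : Submodule ℝ X) : Prop :=
  ∀ (Y : Type*) [NormedAddCommGroup Y] [NormedSpace ℝ Y] [CompleteSpace Y]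
    (S : Y →L[ℝ] X ⧸ J), ∃ T : Y →L[ℝ] X, (∀ y, J.mkQ (T y) = S y) ∧ ‖T‖ = ‖S‖

/-- The subspace of `C(Ω)` of functions vanishing on a subset `D` of `Ω`. -/
def vanishingIdeal (Ω : Type*) [TopologicalSpace Ω] [CompactSpace Ω] (D : Set Ω) :
    Submodule ℝ C(Ω, ℝ) where
  carrier := {f : C(Ω, ℝ) | ∀ t ∈ D, f t = 0}
  add_mem' := by
    intro f g hf hg t ht
    simp [hf t ht, hg t ht]
  zero_mem' := by intro t ht; simp
  smul_mem' := by
    intro c f hf t ht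
    simp [hf t ht]

noncomputable section Dugundji

open Metric TopologicalSpace Set

variable {Ω : Type*} [MetricSpace Ω] [CompactSpace Ω] (D : Set Ω) [Nonempty D]

/-- A dense sequence in `D`. -/
def dgd : ℕ → D := denseSeq D

/-- The Dugundji "bump" functions. -/
def dgu (i : ℕ) (x : Ω) : ℝ := max (2 * infDist x D - dist x (dgd D i)) 0

lemma dgu_nonneg (i : ℕ) (x : Ω) : 0 ≤ dgu D i x := le_max_right _ _

lemma dgu_le (i : ℕ) (x : Ω) : dgu D i x ≤ 2 * infDist x D :=
  max_le (by linarith [dist_nonneg (x := x) (y := (dgd D i : Ω))])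
    (mul_nonneg (by norm_num) Metric.infDist_nonneg)

lemma dgu_continuous (i : ℕ) : Continuous (dgu D i) :=
  ((continuous_infDist_pt D).const_smul (2 : ℝ)|>.sub
    (continuous_id.dist continuous_const)).max continuous_const

/-- The weight functions: geometric damping times the bumps. -/
def dgw (i : ℕ) (x : Ω) : ℝ := (1 / 2 : ℝ) ^ i * dgu D i x

lemma dgw_nonneg (i : ℕ) (x : Ω) : 0 ≤ dgw D i x :=
  mul_nonneg (by positivity) (dgu_nonneg D i x)

lemma dgw_continuous (i : ℕ) : Continuous (dgw D i) :=
  continuous_const.mul (dgu_continuous D i)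

/-- A uniform bound constant. -/
def dgCd (Ω : Type*) [MetricSpace Ω] [CompactSpace Ω] : ℝ := 2 * diam (univ : Set Ω)

lemma dgCd_nonneg : 0 ≤ dgCd Ω := by
  have := diam_nonneg (s := (univ : Set Ω)); unfold dgCd; linarith

lemma infDist_le_diam (x : Ω) : infDist x D ≤ diam (univ : Set Ω) := by
  obtain ⟨y⟩ := (inferInstance : Nonempty D)
  exact le_trans (infDist_le_dist_of_mem y.2)
    (dist_le_diam_of_mem isCompact_univ.isBounded (mem_univ _) (mem_univ _))

lemma dgu_le_Cd (i : ℕ) (x : Ω) : dgu D i x ≤ dgCd Ω :=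
  le_trans (dgu_le D i x) (by unfold dgCd; linarith [infDist_le_diam D x])

lemma dgw_norm_le (i : ℕ) (x : Ω) : ‖dgw D i x‖ ≤ (1 / 2 : ℝ) ^ i * dgCd Ω := by
  rw [Real.norm_eq_abs, abs_of_nonneg (dgw_nonneg D i x)]
  exact mul_le_mul_of_nonneg_left (dgu_le_Cd D i x) (by positivity)

lemma dg_geo_summable (C : ℝ) : Summable fun i : ℕ => (1 / 2 : ℝ) ^ i * C :=
  (summable_geometric_of_lt_one (by norm_num) (by norm_num)).mul_right C

lemma dgw_summable (x : Ω) : Summable fun i => dgw D i x :=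
  Summable.of_norm_bounded (dg_geo_summable (dgCd Ω)) (fun i => dgw_norm_le D i x)

/-- The normalizing sum. -/
def dgσ (x : Ω) : ℝ := ∑' i, dgw D i x

lemma dgσ_continuous : Continuous (dgσ D) :=
  continuous_tsum (dgw_continuous D) (dg_geo_summable (dgCd Ω)) (fun i x => dgw_norm_le D i x)

lemma dgσ_nonneg (x : Ω) : 0 ≤ dgσ D x :=
  tsum_nonneg (fun i => dgw_nonneg D i x)

lemma dgσ_pos (hD : IsClosed D) {x : Ω} (hx : x ∉ D) : 0 < dgσ D x := by
  have hne : D.Nonempty := Set.nonempty_coe_sort.mp ‹_›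
  have hr : 0 < infDist x D := (hD.notMem_iff_infDist_pos hne).mp hx
  have h1 : infDist x D < 2 * infDist x D := by linarith
  obtain ⟨y, hy, hdy⟩ := (infDist_lt_iff hne).mp h1
  -- find a member of the dense sequence close to y
  obtain ⟨i, hi⟩ := (denseRange_denseSeq D).exists_dist_lt (⟨y, hy⟩ : D)
    (show 0 < 2 * infDist x D - dist x y by linarith)
  have hxd : dist x (dgd D i : Ω) < 2 * infDist x D := by
    have : dist (⟨y, hy⟩ : D) (dgd D i) = dist y (dgd D i : Ω) := rfl
    calc dist x (dgd D i : Ω) ≤ dist x y + dist y (dgd D i : Ω) := dist_triangle _ _ _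
      _ < 2 * infDist x D := by rw [← this]; unfold dgd; linarith [hi]
  have hu : 0 < dgu D i x := by
    unfold dgu; rw [lt_max_iff]; left; linarith
  have hw : 0 < dgw D i x := mul_pos (by positivity) hu
  exact lt_of_lt_of_le hw (Summable.le_tsum (dgw_summable D x) i (fun j _ => dgw_nonneg D j x))

variable [CompactSpace D]

/-- The numerator sum. -/
def dgg (f : C(D, ℝ)) (x : Ω) : ℝ := ∑' i, dgw D i x * f (dgd D i)

lemma dgg_term_norm_le (f : C(D, ℝ)) (i : ℕ) (x : Ω) :
    ‖dgw D i x * f (dgd D i)‖ ≤ (1 / 2 : ℝ) ^ i * dgCd Ω * ‖f‖ := by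
  rw [norm_mul]
  exact mul_le_mul (dgw_norm_le D i x) (f.norm_coe_le_norm _) (norm_nonneg _)
    (mul_nonneg (by positivity) (dgCd_nonneg))

lemma dgg_summable (f : C(D, ℝ)) (x : Ω) :
    Summable fun i => dgw D i x * f (dgd D i) := by
  refine Summable.of_norm_bounded ?_ (fun i => dgg_term_norm_le D f i x)
  simpa [mul_assoc] using dg_geo_summable (dgCd Ω * ‖f‖)

lemma dgg_continuous (f : C(D, ℝ)) : Continuous (dgg D f) := by
  refine continuous_tsum (fun i => (dgw_continuous D i).mul continuous_const) ?_
    (fun i x => dgg_term_norm_le D f i x)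
  simpa [mul_assoc] using dg_geo_summable (dgCd Ω * ‖f‖)

/-- The key estimate: if all contributing sample values are `ε`-close to `a`,
then the weighted sum is `ε·σ`-close to `a·σ`. -/
lemma dgg_est (f : C(D, ℝ)) (a ε : ℝ) (hε : 0 ≤ ε) (x : Ω)
    (h : ∀ i, dgu D i x ≠ 0 → |f (dgd D i) - a| ≤ ε) :
    |dgg D f x - a * dgσ D x| ≤ ε * dgσ D x := by
  have hsf := dgg_summable D f x
  have hsw := dgw_summable D x
  have h1 : dgg D f x - a * dgσ D x = ∑' i, dgw D i x * (f (dgd D i) - a) := by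
    unfold dgg dgσ
    rw [show (∑' i, dgw D i x * (f (dgd D i) - a))
        = ∑' i, (dgw D i x * f (dgd D i) - dgw D i x * a) from tsum_congr fun i => by ring,
      Summable.tsum_sub hsf (hsw.mul_right a), tsum_mul_right]
    ring
  rw [h1]
  have h2 : ∀ i, |dgw D i x * (f (dgd D i) - a)| ≤ dgw D i x * ε := by
    intro i
    by_cases hu : dgu D i x = 0
    · have : dgw D i x = 0 := by unfold dgw; rw [hu]; ring
      rw [this]; simp
    · rw [abs_mul, abs_of_nonneg (dgw_nonneg D i x)]
      exact mul_le_mul_of_nonneg_left (h i hu) (dgw_nonneg D i x)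
  calc |∑' i, dgw D i x * (f (dgd D i) - a)|
      ≤ ∑' i, |dgw D i x * (f (dgd D i) - a)| := by
        simpa [Real.norm_eq_abs] using
          norm_tsum_le_tsum_norm ((hsf.sub (hsw.mul_right a)).congr (g := fun i => dgw D i x * (f (dgd D i) - a))
            (fun i => by ring)).norm
    _ ≤ ∑' i, dgw D i x * ε := Summable.tsum_le_tsum h2
        (((hsf.sub (hsw.mul_right a)).congr (g := fun i => dgw D i x * (f (dgd D i) - a)) (fun i => by ring)).abs) (hsw.mul_right ε)
    _ = ε * dgσ D x := by rw [tsum_mul_right]; unfold dgσ; ring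

lemma dgg_abs_le (f : C(D, ℝ)) (x : Ω) : |dgg D f x| ≤ ‖f‖ * dgσ D x := by
  have := dgg_est D f 0 ‖f‖ (norm_nonneg f) x (fun i _ => by
    simpa [Real.norm_eq_abs] using f.norm_coe_le_norm (dgd D i))
  simpa using this

open Classical in
/-- The Dugundji extension as a bare function. -/
def dgEfun (f : C(D, ℝ)) (x : Ω) : ℝ :=
  if h : x ∈ D then f ⟨x, h⟩ else dgg D f x / dgσ D x

open Classical in
lemma dgEfun_eq_of_mem (f : C(D, ℝ)) {x : Ω} (hx : x ∈ D) :
    dgEfun D f x = f ⟨x, hx⟩ := dif_pos hx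

open Classical in
lemma dgEfun_eq_of_not_mem (f : C(D, ℝ)) {x : Ω} (hx : x ∉ D) :
    dgEfun D f x = dgg D f x / dgσ D x := dif_neg hx

lemma dgEfun_continuous (hD : IsClosed D) (f : C(D, ℝ)) : Continuous (dgEfun D f) := by
  rw [continuous_iff_continuousAt]
  intro t
  by_cases ht : t ∈ D
  · rw [Metric.continuousAt_iff]
    intro ε hε
    obtain ⟨δ', hδ', hf⟩ := Metric.continuousAt_iff.mp
      (f.continuous.continuousAt (x := ⟨t, ht⟩)) (ε / 2) (by positivity)
    refine ⟨δ' / 3, by positivity, ?_⟩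
    intro x hx
    have hEt : dgEfun D f t = f ⟨t, ht⟩ := dgEfun_eq_of_mem D f ht
    rw [hEt]
    by_cases hxD : x ∈ D
    · have hEx : dgEfun D f x = f ⟨x, hxD⟩ := dgEfun_eq_of_mem D f hxD
      rw [hEx]
      have hd : dist (⟨x, hxD⟩ : D) (⟨t, ht⟩ : D) < δ' := by
        have : dist (⟨x, hxD⟩ : D) (⟨t, ht⟩ : D) = dist x t := rfl
        rw [this]; linarith
      linarith [hf hd]
    · have hEx : dgEfun D f x = dgg D f x / dgσ D x := dgEfun_eq_of_not_mem D f hxD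
      rw [hEx]
      have hσ : 0 < dgσ D x := dgσ_pos D hD hxD
      have hrx : infDist x D ≤ dist x t := infDist_le_dist_of_mem ht
      have key : ∀ i, dgu D i x ≠ 0 → |f (dgd D i) - f ⟨t, ht⟩| ≤ ε / 2 := by
        intro i hu
        have h1 : dist x (dgd D i : Ω) < 2 * infDist x D := by
          by_contra hcon
          push_neg at hcon
          exact hu (max_eq_right (by linarith))
        have h2 : dist (dgd D i) (⟨t, ht⟩ : D) < δ' := by
          have : dist (dgd D i) (⟨t, ht⟩ : D) = dist (dgd D i : Ω) t := rfl
          rw [this]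
          calc dist (dgd D i : Ω) t ≤ dist (dgd D i : Ω) x + dist x t := dist_triangle _ _ _
            _ < δ' := by rw [dist_comm]; linarith
        have := hf h2
        rw [Real.dist_eq] at this
        linarith
      have hest := dgg_est D f (f ⟨t, ht⟩) (ε / 2) (by positivity) x key
      have : |dgg D f x / dgσ D x - f ⟨t, ht⟩| ≤ ε / 2 := by
        rw [show dgg D f x / dgσ D x - f ⟨t, ht⟩
            = (dgg D f x - f ⟨t, ht⟩ * dgσ D x) / dgσ D x by field_simp,
          abs_div, abs_of_pos hσ, div_le_iff₀ hσ]
        linarith [hest]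
      rw [Real.dist_eq]
      linarith
  · have hcont : ContinuousAt (fun x => dgg D f x / dgσ D x) t :=
      ((dgg_continuous D f).continuousAt).div ((dgσ_continuous D).continuousAt)
        (ne_of_gt (dgσ_pos D hD ht))
    refine hcont.congr ?_
    filter_upwards [hD.isOpen_compl.mem_nhds ht] with x hx
    exact (dgEfun_eq_of_not_mem D f hx).symm

/-- The Dugundji extension operator, as a linear map. -/
def dgE (hD : IsClosed D) : C(D, ℝ) →ₗ[ℝ] C(Ω, ℝ) where
  toFun f := ⟨dgEfun D f, dgEfun_continuous D hD f⟩
  map_add' f g := by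
    ext x
    show dgEfun D (f + g) x = dgEfun D f x + dgEfun D g x
    by_cases hx : x ∈ D
    · rw [dgEfun_eq_of_mem D _ hx, dgEfun_eq_of_mem D _ hx, dgEfun_eq_of_mem D _ hx]
      simp
    · rw [dgEfun_eq_of_not_mem D _ hx, dgEfun_eq_of_not_mem D _ hx,
        dgEfun_eq_of_not_mem D _ hx, ← add_div]
      congr 1
      unfold dgg
      rw [← Summable.tsum_add (dgg_summable D f x) (dgg_summable D g x)]
      exact tsum_congr fun i => by simp; ring
  map_smul' c f := by
    ext x
    show dgEfun D (c • f) x = c * dgEfun D f x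
    by_cases hx : x ∈ D
    · rw [dgEfun_eq_of_mem D _ hx, dgEfun_eq_of_mem D _ hx]
      simp
    · rw [dgEfun_eq_of_not_mem D _ hx, dgEfun_eq_of_not_mem D _ hx, ← mul_div_assoc]
      congr 1
      unfold dgg
      rw [← tsum_mul_left]
      exact tsum_congr fun i => by simp; ring

lemma dgE_extends (hD : IsClosed D) (f : C(D, ℝ)) (t : D) : dgE D hD f (t : Ω) = f t := by
  show dgEfun D f (t : Ω) = f t
  rw [dgEfun_eq_of_mem D f t.2]

lemma dgE_norm_le (hD : IsClosed D) (f : C(D, ℝ)) : ‖dgE D hD f‖ ≤ ‖f‖ := by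
  rw [ContinuousMap.norm_le _ (norm_nonneg f)]
  intro x
  show ‖dgEfun D f x‖ ≤ ‖f‖
  by_cases hx : x ∈ D
  · rw [dgEfun_eq_of_mem D f hx]; exact f.norm_coe_le_norm _
  · rw [dgEfun_eq_of_not_mem D f hx]
    have hσ : 0 < dgσ D x := dgσ_pos D hD hx
    rw [Real.norm_eq_abs, abs_div, abs_of_pos hσ, div_le_iff₀ hσ]
    exact dgg_abs_le D f x

end Dugundji

open Metric TopologicalSpace Set

lemma mem_vanishingIdeal {Ω : Type*} [TopologicalSpace Ω] [CompactSpace Ω] {D : Set Ω}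
    {f : C(Ω, ℝ)} : f ∈ vanishingIdeal Ω D ↔ ∀ t ∈ D, f t = 0 := Iff.rfl

/-- For a compact metrizable space `Ω`, a closed subset `D ⊆ Ω` and
`J = {f ∈ C(Ω) : f|_D ≡ 0}`, the pair `(C(Ω), J)` has the quotient lifting property. -/
theorem qlp_of_M_ideal_in_continuous_functions_on_compact_metrizable
    (Ω : Type*) [TopologicalSpace Ω] [CompactSpace Ω] [TopologicalSpace.MetrizableSpace Ω]
    (D : Set Ω) (hD : IsClosed D) :
    HasQLP C(Ω, ℝ) (vanishingIdeal Ω D) := by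
  letI : MetricSpace Ω := TopologicalSpace.metrizableSpaceMetric Ω
  intro Y _ _ _ S
  rcases D.eq_empty_or_nonempty with rfl | hne
  · -- trivial case: J = ⊤, the quotient is trivial
    have hJ : vanishingIdeal Ω (∅ : Set Ω) = ⊤ := by
      rw [eq_top_iff]
      intro f _ t ht
      exact absurd ht (Set.notMem_empty t)
    haveI : Subsingleton (C(Ω, ℝ) ⧸ vanishingIdeal Ω (∅ : Set Ω)) := by
      rw [Submodule.Quotient.subsingleton_iff]
      exact hJ
    have hS : S = 0 := by ext y; exact Subsingleton.elim _ _
    refine ⟨0, fun y => Subsingleton.elim _ _, ?_⟩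
    rw [hS, ContinuousLinearMap.opNorm_zero, ContinuousLinearMap.opNorm_zero]
  · haveI : Nonempty D := hne.to_subtype
    haveI : CompactSpace D := isCompact_iff_compactSpace.mp hD.isCompact
    -- the restriction operator
    let ρ : C(Ω, ℝ) →ₗ[ℝ] C(D, ℝ) :=
      { toFun := fun f => f.restrict D
        map_add' := fun f g => by ext t; simp [ContinuousMap.restrict]
        map_smul' := fun c f => by ext t; simp [ContinuousMap.restrict] }
    have hρ_apply : ∀ (f : C(Ω, ℝ)) (t : D), ρ f t = f (t : Ω) := fun f t => rfl
    have hρ_norm : ∀ f, ‖ρ f‖ ≤ ‖f‖ := by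
      intro f
      rw [ContinuousMap.norm_le _ (norm_nonneg f)]
      intro t
      exact f.norm_coe_le_norm (t : Ω)
    have hker : vanishingIdeal Ω D ≤ LinearMap.ker ρ := by
      intro f hf
      rw [LinearMap.mem_ker]
      ext t
      exact hf t t.2
    let ρq : (C(Ω, ℝ) ⧸ vanishingIdeal Ω D) →ₗ[ℝ] C(D, ℝ) := (vanishingIdeal Ω D).liftQ ρ hker
    have hρq_mk : ∀ f : C(Ω, ℝ), ρq (Submodule.Quotient.mk f) = ρ f := fun f => rfl
    have hρq_le : ∀ q : C(Ω, ℝ) ⧸ vanishingIdeal Ω D, ‖ρq q‖ ≤ ‖q‖ := by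
      intro q
      refine le_of_forall_pos_le_add ?_
      intro ε hε
      obtain ⟨m, hm, hm2⟩ := Submodule.Quotient.norm_mk_lt q hε
      calc ‖ρq q‖ = ‖ρ m‖ := by rw [← hm, hρq_mk]
        _ ≤ ‖m‖ := hρ_norm m
        _ ≤ ‖q‖ + ε := hm2.le
    -- the extension operator
    let E := dgE D hD
    let Tlin : Y →ₗ[ℝ] C(Ω, ℝ) := E ∘ₗ ρq ∘ₗ (S : Y →ₗ[ℝ] C(Ω, ℝ) ⧸ vanishingIdeal Ω D)
    have hTb : ∀ y, ‖Tlin y‖ ≤ ‖S‖ * ‖y‖ := fun y =>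
      le_trans (dgE_norm_le D hD _) (le_trans (hρq_le _) (S.le_opNorm y))
    let T : Y →L[ℝ] C(Ω, ℝ) := Tlin.mkContinuous ‖S‖ hTb
    have hTlift : ∀ y, (vanishingIdeal Ω D).mkQ (T y) = S y := by
      intro y
      obtain ⟨m, hm⟩ := Submodule.Quotient.mk_surjective (vanishingIdeal Ω D) (S y)
      have hT : T y = E (ρq (S y)) := rfl
      rw [hT, ← hm, hρq_mk, Submodule.mkQ_apply, Submodule.Quotient.eq]
      intro t ht
      have h1 : (E (ρ m)) t = ρ m ⟨t, ht⟩ := dgE_extends D hD (ρ m) ⟨t, ht⟩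
      simp only [ContinuousMap.sub_apply]
      rw [h1, hρ_apply]
      simp
    refine ⟨T, hTlift, le_antisymm (Tlin.mkContinuous_norm_le (norm_nonneg S) hTb) ?_⟩
    apply ContinuousLinearMap.opNorm_le_bound _ (norm_nonneg T)
    intro y
    calc ‖S y‖ = ‖(vanishingIdeal Ω D).mkQ (T y)‖ := by rw [hTlift y]
      _ ≤ ‖T y‖ := Submodule.Quotient.norm_mk_le (vanishingIdeal Ω D) (T y)
      _ ≤ ‖T‖ * ‖y‖ := T.le_opNorm y
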